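/- Let N be a finite group with a normal Sylow p-subgroup P and cyclic complement W of order coprime to p, and suppose μ is an irreducible complex character of N and w ∈ W is an element whose centralizer in N equals W. If the linear characters of N inflated from N/P ≅ W take at least deg(μ)+1 distinct values at the image of w, then μ vanishes on the coset of w unless μ is linear. (Concretely, in N = P ⋊ C_{q−1} = N_G(P) for G = ²G₂(q): if w_j ∈ F_q^×, w_j ≠ ±1, then every nonlinear irreducible character of N vanishes on the conjugacy class P·h(w_j).) -/

import Mathlib

open CategoryTheory Module




/-- Let `N` be a finite group with normal Sylow `p`-subgroup `P` and cyclic complement `W`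
of order coprime to `p`, `μ` an irreducible complex character of `N`, and `w ∈ W` with
`C_N(w) = W`.  If the linear characters of `N` trivial on `P` take at least `deg μ + 1`
distinct values at `w`, then `μ` vanishes on the coset `P·w` unless `μ` is linear. -/
theorem char_vanishes_on_coset (p : ℕ) [Fact p.Prime] {N : Type} [Group N] [Fintype N]
    (P : Sylow p N) (hPnorm : (P : Subgroup N).Normal)
    (W : Subgroup N) (hcompl : Subgroup.IsComplement' (P : Subgroup N) W)
    (hWcyc : IsCyclic W) (hcop : Nat.Coprime (Nat.card W) p)
    (μ : FDRep ℂ N) [CategoryTheory.Simple μ]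
    (w : N) (hw : w ∈ W) (hcent : Subgroup.centralizer {w} = W)
    (hvals : Module.finrank ℂ μ.V + 1 ≤
      Nat.card {c : ℂ | ∃ α : N →* ℂ, (∀ x ∈ (P : Subgroup N), α x = 1) ∧ α w = c})
    (hnotlin : Module.finrank ℂ μ.V ≠ 1) :
    ∀ x ∈ (P : Subgroup N), μ.character (x * w) = 0 := by
  classical
  -- Step 1 : every element of the coset `P·w` is conjugate to `w`
  have step1 : ∀ x ∈ (P : Subgroup N), μ.character (x * w) = μ.character w := by
    intro x hx
    set f : ↥(P : Subgroup N) → ↥(P : Subgroup N) := fun y =>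
      ⟨(y : N) * (w * (y : N)⁻¹ * w⁻¹),
        mul_mem y.2 (hPnorm.conj_mem _ (inv_mem y.2) w)⟩ with hf
    have hinj : Function.Injective f := by
      intro y₁ y₂ h
      have h' : (y₁ : N) * (w * (y₁ : N)⁻¹ * w⁻¹) = (y₂ : N) * (w * (y₂ : N)⁻¹ * w⁻¹) :=
        congrArg Subtype.val h
      have e1 : (y₁ : N) * w * (y₁ : N)⁻¹ = (y₂ : N) * w * (y₂ : N)⁻¹ := by
        have h2 := congrArg (fun z => z * w) h'
        simpa [mul_assoc] using h2
      have hcomm : w * ((y₂ : N)⁻¹ * y₁) = ((y₂ : N)⁻¹ * y₁) * w := by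
        calc w * ((y₂ : N)⁻¹ * y₁)
            = (y₂ : N)⁻¹ * ((y₂ : N) * w * (y₂ : N)⁻¹ * y₁) := by group
          _ = (y₂ : N)⁻¹ * ((y₁ : N) * w * (y₁ : N)⁻¹ * y₁) := by rw [e1]
          _ = ((y₂ : N)⁻¹ * y₁) * w := by group
      have hmem : ((y₂ : N)⁻¹ * y₁) ∈ Subgroup.centralizer {w} := by
        rw [Subgroup.mem_centralizer_iff]
        intro h hh
        rw [Set.mem_singleton_iff] at hh
        subst hh
        exact hcomm
      rw [hcent] at hmem
      have hmemP : ((y₂ : N)⁻¹ * y₁) ∈ (P : Subgroup N) := mul_mem (inv_mem y₂.2) y₁.2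
      have h1 : ((y₂ : N)⁻¹ * y₁) = 1 := Subgroup.disjoint_def.mp hcompl.disjoint hmemP hmem
      have : (y₂ : N) = y₁ := by rw [inv_mul_eq_one] at h1; exact h1
      exact Subtype.ext this.symm
    have hsurj : Function.Surjective f := Finite.injective_iff_surjective.mp hinj
    obtain ⟨y, hy⟩ := hsurj ⟨x, hx⟩
    have hy' : (y : N) * (w * (y : N)⁻¹ * w⁻¹) = x := congrArg Subtype.val hy
    have hconj : (y : N) * w * (y : N)⁻¹ = x * w := by rw [← hy']; group
    rw [← hconj, FDRep.char_conj]
  -- Schur: every endomorphism is scalar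
  have hscal : ∀ φ : μ ⟶ μ, ∃ c : ℂ, c • 𝟙 μ = φ := fun φ =>
    CategoryTheory.endomorphism_simple_eq_smul_id ℂ φ
  have hχ : ∀ g : N, μ.character g = LinearMap.trace ℂ _ (μ.ρ g) := fun g => rfl
  set d := Module.finrank ℂ μ.V with hd
  -- dimension is positive
  have hdpos : 0 < d := by
    rcases Nat.eq_zero_or_pos d with h0 | h
    · exfalso
      have h0' : Module.finrank ℂ ↥μ = 0 := h0
      haveI hsub : Subsingleton ↥μ := Module.finrank_zero_iff.mp h0'
      have : (𝟙 μ) = 0 := by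
        apply Action.hom_ext
        apply FGModuleCat.hom_ext
        apply LinearMap.ext
        intro v
        exact @Subsingleton.elim ↥μ hsub _ _
      exact CategoryTheory.id_nonzero μ this
    · exact h
  have hdC : (d : ℂ) ≠ 0 := by exact_mod_cast hdpos.ne'
  have htr1 : LinearMap.trace ℂ ↥μ (1 : ↥μ →ₗ[ℂ] ↥μ) = (d : ℂ) := by
    rw [LinearMap.trace_one]
  -- the averaging operator
  set T : ↥μ →ₗ[ℂ] ↥μ := ∑ x : ↥(P : Subgroup N), μ.ρ (x : N) with hT
  have hTcomm : ∀ g : N, μ.ρ g * T = T * μ.ρ g := by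
    intro g
    let e : ↥(P : Subgroup N) ≃ ↥(P : Subgroup N) :=
      { toFun := fun x => ⟨g * x * g⁻¹, hPnorm.conj_mem _ x.2 g⟩
        invFun := fun x => ⟨g⁻¹ * x * g, by simpa using hPnorm.conj_mem _ x.2 g⁻¹⟩
        left_inv := fun x => Subtype.ext (by group)
        right_inv := fun x => Subtype.ext (by group) }
    rw [hT, Finset.mul_sum, Finset.sum_mul]
    simp only [← map_mul]
    exact Fintype.sum_equiv e (fun x => μ.ρ (g * (x : N))) (fun x => μ.ρ ((x : N) * g))
      (fun x => by
        show μ.ρ (g * (x : N)) = μ.ρ ((g * (x : N) * g⁻¹) * g)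
        congr 1
        group)
  have hPT : ∀ x : ↥(P : Subgroup N), μ.ρ (x : N) * T = T := by
    intro x
    rw [hT, Finset.mul_sum]
    simp only [← map_mul]
    exact Fintype.sum_equiv (Equiv.mulLeft x) (fun y => μ.ρ ((x : N) * (y : N)))
      (fun y => μ.ρ (y : N)) (fun y => rfl)
  -- T is an endomorphism of μ, hence scalar
  let φ : μ ⟶ μ := ⟨ObjectProperty.homMk (ModuleCat.ofHom T), fun g => by
    ext v; exact LinearMap.congr_fun (hTcomm g).symm v⟩
  obtain ⟨c, hc⟩ := hscal φ
  have hThom : T = c • (1 : ↥μ →ₗ[ℂ] ↥μ) := by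
    have := congrArg (fun f : μ ⟶ μ => f.hom.hom.hom) hc
    exact this.symm
  -- T² = |P| T forces c = 0 or c = |P|
  set nP : ℕ := Fintype.card ↥(P : Subgroup N) with hnP
  have hnPC : (nP : ℂ) ≠ 0 := by
    have : 0 < nP := Fintype.card_pos
    exact_mod_cast this.ne'
  have hTsq : T * T = (nP : ℂ) • T := by
    nth_rewrite 1 [hT]
    rw [Finset.sum_mul]
    simp only [hPT]
    rw [Finset.sum_const, Finset.card_univ, hnP]
    rw [Nat.cast_smul_eq_nsmul ℂ]
  have hcc : c * c = (nP : ℂ) * c := by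
    have h1 := hTsq
    rw [hThom] at h1
    have h2 : (c * c) • (1 : ↥μ →ₗ[ℂ] ↥μ) = ((nP : ℂ) * c) • 1 := by
      simpa [smul_smul, mul_comm] using h1
    have h3 := congrArg (LinearMap.trace ℂ ↥μ) h2
    simp only [map_smul, smul_eq_mul, htr1] at h3
    exact mul_right_cancel₀ hdC h3
  -- sum of χ over the coset, two ways
  have hsum : (nP : ℂ) * μ.character w = c * μ.character w := by
    have A : ∑ x : ↥(P : Subgroup N), μ.character ((x : N) * w) = (nP : ℂ) * μ.character w := by
      have hpt : ∀ x : ↥(P : Subgroup N), μ.character ((x : N) * w) = μ.character w :=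
        fun x => step1 (x : N) x.2
      simp only [hpt]
      rw [Finset.sum_const, Finset.card_univ, ← hnP, nsmul_eq_mul]
    have B : ∑ x : ↥(P : Subgroup N), μ.character ((x : N) * w) = c * μ.character w := by
      have h4 : ∑ x : ↥(P : Subgroup N), μ.character ((x : N) * w)
          = LinearMap.trace ℂ ↥μ (T * μ.ρ w) := by
        rw [hT, Finset.sum_mul, map_sum]
        exact Finset.sum_congr rfl fun x _ => by rw [hχ, map_mul]
      rw [h4, hThom, smul_mul_assoc, one_mul, map_smul, smul_eq_mul, ← hχ]
    rw [← A, B]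
  rcases mul_eq_mul_right_iff.mp hcc with hc0 | hc0
  · -- c = |P| : all of P acts trivially, every ρ g is scalar, contradiction with dim ≥ 2
    exfalso
    have hρ1 : ∀ x : ↥(P : Subgroup N), μ.ρ (x : N) = 1 := by
      intro x
      have h5 := hPT x
      rw [hThom, hc0] at h5
      have h6 : (nP : ℂ) • μ.ρ (x : N) = (nP : ℂ) • (1 : ↥μ →ₗ[ℂ] ↥μ) := by
        simpa [mul_smul_comm] using h5
      exact smul_right_injective _ hnPC h6
    -- every ρ g is scalar
    have hrepr : ∀ g : N, ∃ u : ↥W, μ.ρ g = μ.ρ (u : N) := by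
      intro g
      obtain ⟨⟨x, u⟩, hxu⟩ := hcompl.2 g
      refine ⟨⟨(u : N), u.2⟩, ?_⟩
      have : μ.ρ ((x : N) * (u : N)) = μ.ρ (u : N) := by
        rw [map_mul, hρ1 ⟨(x : N), x.2⟩, one_mul]
      rw [← hxu]; exact this
    have hcommρ : ∀ g h : N, μ.ρ g * μ.ρ h = μ.ρ h * μ.ρ g := by
      intro g h
      obtain ⟨u, hu⟩ := hrepr g
      obtain ⟨v, hv⟩ := hrepr h
      rw [hu, hv, ← map_mul, ← map_mul]
      congr 1
      letI : CommGroup ↥W := IsCyclic.commGroup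
      have : u * v = v * u := mul_comm u v
      exact_mod_cast congrArg Subtype.val this
    have hscallin : ∀ f : ↥μ →ₗ[ℂ] ↥μ, ∃ cf : ℂ, f = cf • 1 := by
      intro f
      have hcommf : ∀ g : N, f * μ.ρ g = μ.ρ g * f := by
        intro g
        obtain ⟨a, ha⟩ : ∃ a : ℂ, μ.ρ g = a • 1 := by
          obtain ⟨a, ha⟩ := hscal ⟨ObjectProperty.homMk (ModuleCat.ofHom (μ.ρ g)), fun h => by
            ext v; exact LinearMap.congr_fun (hcommρ g h) v⟩
          refine ⟨a, ?_⟩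
          have := congrArg (fun f : μ ⟶ μ => f.hom.hom.hom) ha
          exact this.symm
        rw [ha, mul_smul_comm, smul_mul_assoc, mul_one, one_mul]
      obtain ⟨cf, hcf⟩ := hscal ⟨ObjectProperty.homMk (ModuleCat.ofHom f), fun g => by
        ext v; exact LinearMap.congr_fun (hcommf g) v⟩
      refine ⟨cf, ?_⟩
      have := congrArg (fun f : μ ⟶ μ => f.hom.hom.hom) hcf
      exact this.symm
    -- dimension at least 2 gives a non-scalar endomorphism
    have hd2 : 2 ≤ d := by omega
    have hB : Module.finrank ℂ ↥μ = d := rfl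
    let B : Basis (Fin d) ℂ ↥μ := hB ▸ Module.finBasis ℂ ↥μ
    let i0 : Fin d := ⟨0, by omega⟩
    let i1 : Fin d := ⟨1, by omega⟩
    let f0 : ↥μ →ₗ[ℂ] ↥μ := B.constr ℂ (fun i => if i = i0 then B i0 else 0)
    obtain ⟨cf, hcf⟩ := hscallin f0
    have hf0 : f0 (B i0) = B i0 := by
      rw [Basis.constr_basis]; simp
    have hf1 : f0 (B i1) = 0 := by
      rw [Basis.constr_basis]
      simp [i0, i1, Fin.ext_iff]
    have hcf0 : cf = 0 := by
      have : cf • B i1 = 0 := by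
        rw [← hf1, hcf]; simp
      rcases smul_eq_zero.mp this with h | h
      · exact h
      · exact absurd h (B.ne_zero i1)
    have : B i0 = 0 := by
      have := hf0
      rw [hcf, hcf0] at this
      simpa using this.symm
    exact B.ne_zero i0 this
  · -- c = 0 : χ(w) = 0
    have hw0 : μ.character w = 0 := by
      rw [hc0, zero_mul] at hsum
      exact (mul_eq_zero.mp hsum).resolve_left hnPC
    intro x hx
    rw [step1 x hx, hw0]
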